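/- For any continuous curves P, Q : [0,1] → ℝ^d, the infimum in the definition of the Fréchet distance is attained: there exist continuous nondecreasing surjections σ, τ : [0,1] → [0,1] such that sup_{t ∈ [0,1]} dist(P(σ(t)), Q(τ(t))) = δ_F(P, Q). In particular, if δ_F(P, Q) ≤ ε then there exist such σ, τ with sup_{t ∈ [0,1]} dist(P(σ(t)), Q(τ(t))) ≤ ε. -/

import Mathlib

open Set Metric

noncomputable section

/-- Euclidean space ℝ^d. -/
abbrev Euc (d : ℕ) := EuclideanSpace ℝ (Fin d)

/-- A pair of continuous nondecreasing surjections from `[0,1]` onto `[0,1]`. -/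
def IsReparamPair (σ τ : ℝ → ℝ) : Prop :=
  ContinuousOn σ (Set.Icc 0 1) ∧ MonotoneOn σ (Set.Icc 0 1) ∧
    σ '' Set.Icc 0 1 = Set.Icc 0 1 ∧
  ContinuousOn τ (Set.Icc 0 1) ∧ MonotoneOn τ (Set.Icc 0 1) ∧
    τ '' Set.Icc 0 1 = Set.Icc 0 1

/-- The Fréchet distance between two curves `[0,1] → ℝ^d`. -/
noncomputable def frechetDist {d : ℕ} (P Q : ℝ → Euc d) : ℝ :=
  sInf {r : ℝ | ∃ σ τ : ℝ → ℝ, IsReparamPair σ τ ∧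
    r = ⨆ t : Set.Icc (0 : ℝ) 1, dist (P (σ t)) (Q (τ t))}

/-- The polygonal curve with vertices `q 0, …, q n` (so `n` segments),
linearly parametrizing the segment from `q j` to `q (j+1)` on `[j/n, (j+1)/n]`. -/
noncomputable def polyCurve {d : ℕ} (q : ℕ → Euc d) (n : ℕ) (t : ℝ) : Euc d :=
  let j : ℕ := min (⌊t * n⌋.toNat) (n - 1)
  (1 - (t * n - j)) • q j + (t * n - j) • q (j + 1)

/-- The segment from `a` to `b` as a curve on `[0,1]`. -/
def segCurve {d : ℕ} (a b : Euc d) (t : ℝ) : Euc d := (1 - t) • a + t • b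

namespace FrechetAttained

abbrev I01 : Set ℝ := Set.Icc 0 1

lemma zmem : (0:ℝ) ∈ I01 := ⟨le_refl 0, zero_le_one⟩
lemma omem : (1:ℝ) ∈ I01 := ⟨zero_le_one, le_refl 1⟩

instance : CompactSpace I01 := isCompact_iff_compactSpace.mp isCompact_Icc
instance : Nonempty I01 := ⟨⟨0, zmem⟩⟩

/-- Projection of `ℝ` onto `[0,1]`. -/
noncomputable def proj (t : ℝ) : I01 := projIcc 0 1 zero_le_one t

lemma proj_continuous : Continuous proj := @continuous_projIcc ℝ _ 0 1 zero_le_one _ _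

lemma proj_coe {t : ℝ} (ht : t ∈ I01) : ((proj t : I01) : ℝ) = t := by
  rw [proj, projIcc_of_mem zero_le_one ht]

lemma proj_eq (t : I01) : proj (t : ℝ) = t := by
  rw [proj, projIcc_of_mem zero_le_one t.2]

/-- Extend a curve on `[0,1]` to all of `ℝ` by projection. -/
noncomputable def extend {d : ℕ} (P : ℝ → Euc d) : ℝ → Euc d := fun t => P (proj t)

lemma extend_continuous {d : ℕ} {P : ℝ → Euc d} (hP : ContinuousOn P I01) :
    Continuous (extend P) :=
  hP.comp_continuous (continuous_subtype_val.comp proj_continuous) fun t => (proj t).2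

lemma extend_eq {d : ℕ} {P : ℝ → Euc d} {t : ℝ} (ht : t ∈ I01) : extend P t = P t := by
  rw [extend, proj_coe ht]

/-- Normalized reparametrizations: nondecreasing, `2`-Lipschitz in a strong joint sense,
with fixed endpoints. -/
def K : Set (I01 → ℝ) :=
  {σ | σ ⟨0, zmem⟩ = 0 ∧ σ ⟨1, omem⟩ = 1 ∧
       ∀ u v : I01, u ≤ v → σ v - σ u ∈ Set.Icc 0 (2 * ((v : ℝ) - (u : ℝ)))}

lemma K.mono {σ : I01 → ℝ} (hσ : σ ∈ K) : Monotone σ := fun u v huv => by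
  have h := (hσ.2.2 u v huv).1; linarith

lemma K.mem_Icc {σ : I01 → ℝ} (hσ : σ ∈ K) (t : I01) : σ t ∈ I01 := by
  have h0 : (⟨0, zmem⟩ : I01) ≤ t := Subtype.coe_le_coe.mp (by exact t.2.1)
  have h1 : t ≤ ⟨1, omem⟩ := Subtype.coe_le_coe.mp (by exact t.2.2)
  exact ⟨hσ.1 ▸ K.mono hσ h0, hσ.2.1 ▸ K.mono hσ h1⟩

lemma K.lip {σ : I01 → ℝ} (hσ : σ ∈ K) : LipschitzWith 2 σ := by
  apply LipschitzWith.of_dist_le_mul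
  intro x y
  rw [Subtype.dist_eq, Real.dist_eq, Real.dist_eq]
  push_cast
  rcases le_total x y with h | h
  · have h2 := hσ.2.2 x y h
    have hxy : (x:ℝ) ≤ (y:ℝ) := h
    rw [abs_sub_comm (σ x) (σ y), abs_of_nonneg h2.1, abs_sub_comm (x:ℝ) (y:ℝ),
      abs_of_nonneg (by linarith)]
    linarith [h2.2]
  · have h2 := hσ.2.2 y x h
    have hxy : (y:ℝ) ≤ (x:ℝ) := h
    rw [abs_of_nonneg h2.1, abs_of_nonneg (by linarith)]
    linarith [h2.2]

/-- First reparametrization associated to `σ ∈ K`. -/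
noncomputable def Sig (σ : I01 → ℝ) (t : ℝ) : ℝ := σ (proj t)

/-- Second reparametrization associated to `σ ∈ K`. -/
noncomputable def Tau (σ : I01 → ℝ) (t : ℝ) : ℝ := 2 * ((proj t : I01) : ℝ) - σ (proj t)

lemma Sig_coe (σ : I01 → ℝ) (t : I01) : Sig σ (t : ℝ) = σ t := by rw [Sig, proj_eq]

lemma Tau_coe (σ : I01 → ℝ) (t : I01) : Tau σ (t : ℝ) = 2 * (t : ℝ) - σ t := by
  rw [Tau, proj_eq]

lemma K.sig0 {σ : I01 → ℝ} (hσ : σ ∈ K) : Sig σ 0 = 0 := by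
  have h := Sig_coe σ ⟨0, zmem⟩
  rw [hσ.1] at h
  exact h

lemma K.sig1 {σ : I01 → ℝ} (hσ : σ ∈ K) : Sig σ 1 = 1 := by
  have h := Sig_coe σ ⟨1, omem⟩
  rw [hσ.2.1] at h
  exact h

lemma K.tau0 {σ : I01 → ℝ} (hσ : σ ∈ K) : Tau σ 0 = 0 := by
  have h := Tau_coe σ ⟨0, zmem⟩
  rw [hσ.1] at h
  have h' : Tau σ 0 = 2 * 0 - 0 := h
  rw [h']; ring

lemma K.tau1 {σ : I01 → ℝ} (hσ : σ ∈ K) : Tau σ 1 = 1 := by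
  have h := Tau_coe σ ⟨1, omem⟩
  rw [hσ.2.1] at h
  have h' : Tau σ 1 = 2 * 1 - 1 := h
  rw [h']; ring

lemma K.sig_cont {σ : I01 → ℝ} (hσ : σ ∈ K) : Continuous (Sig σ) :=
  (K.lip hσ).continuous.comp proj_continuous

lemma K.tau_cont {σ : I01 → ℝ} (hσ : σ ∈ K) : Continuous (Tau σ) := by
  have h1 : Continuous fun t : ℝ => ((proj t : I01) : ℝ) :=
    continuous_subtype_val.comp proj_continuous
  exact (continuous_const.mul h1).sub (K.sig_cont hσ)

lemma K.sig_mono {σ : I01 → ℝ} (hσ : σ ∈ K) : MonotoneOn (Sig σ) I01 :=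
  fun _ _ _ _ hxy => K.mono hσ (monotone_projIcc zero_le_one hxy)

lemma K.tau_mono {σ : I01 → ℝ} (hσ : σ ∈ K) : MonotoneOn (Tau σ) I01 := by
  intro x _ y _ hxy
  have hple : proj x ≤ proj y := monotone_projIcc zero_le_one hxy
  have h2 := (hσ.2.2 (proj x) (proj y) hple).2
  have hcoe : ((proj x : I01) : ℝ) ≤ ((proj y : I01) : ℝ) := Subtype.coe_le_coe.mpr hple
  simp only [Tau]
  linarith

lemma K.tau_mem {σ : I01 → ℝ} (hσ : σ ∈ K) (t : I01) : 2 * (t : ℝ) - σ t ∈ I01 := by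
  have h0 : Tau σ 0 ≤ Tau σ (t : ℝ) := K.tau_mono hσ zmem t.2 t.2.1
  have h1 : Tau σ (t : ℝ) ≤ Tau σ 1 := K.tau_mono hσ t.2 omem t.2.2
  rw [K.tau0 hσ] at h0
  rw [K.tau1 hσ] at h1
  rw [Tau_coe] at h0 h1
  exact ⟨h0, h1⟩

lemma K.reparam {σ : I01 → ℝ} (hσ : σ ∈ K) : IsReparamPair (Sig σ) (Tau σ) := by
  refine ⟨(K.sig_cont hσ).continuousOn, K.sig_mono hσ, ?_,
    (K.tau_cont hσ).continuousOn, K.tau_mono hσ, ?_⟩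
  · apply Subset.antisymm
    · rintro _ ⟨x, _, rfl⟩
      exact K.mem_Icc hσ (proj x)
    · have h := intermediate_value_Icc zero_le_one (K.sig_cont hσ).continuousOn
      rwa [K.sig0 hσ, K.sig1 hσ] at h
  · apply Subset.antisymm
    · rintro _ ⟨x, hx, rfl⟩
      have : Tau σ x = 2 * ((⟨x, hx⟩ : I01) : ℝ) - σ ⟨x, hx⟩ := Tau_coe σ ⟨x, hx⟩
      rw [this]
      exact K.tau_mem hσ ⟨x, hx⟩
    · have h := intermediate_value_Icc zero_le_one (K.tau_cont hσ).continuousOn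
      rwa [K.tau0 hσ, K.tau1 hσ] at h

/-- The objective functional on `K`. -/
noncomputable def Fv {d : ℕ} (P Q : ℝ → Euc d) (σ : I01 → ℝ) : ℝ :=
  ⨆ t : I01, dist (extend P (σ t)) (extend Q (2 * (t : ℝ) - σ t))

lemma K.sup_eq {d : ℕ} (P Q : ℝ → Euc d) {σ : I01 → ℝ} (hσ : σ ∈ K) :
    (⨆ t : I01, dist (P (Sig σ (t : ℝ))) (Q (Tau σ (t : ℝ)))) = Fv P Q σ := by
  rw [Fv]
  congr 1
  funext t
  rw [Sig_coe, Tau_coe, extend_eq (K.mem_Icc hσ t), extend_eq (K.tau_mem hσ t)]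

lemma K.term_cont {d : ℕ} {P Q : ℝ → Euc d} (hP : ContinuousOn P I01)
    (hQ : ContinuousOn Q I01) {σ : I01 → ℝ} (hσ : σ ∈ K) :
    Continuous fun t : I01 => dist (extend P (σ t)) (extend Q (2 * (t : ℝ) - σ t)) := by
  have h1 : Continuous fun t : I01 => σ t := (K.lip hσ).continuous
  have h2 : Continuous fun t : I01 => 2 * (t : ℝ) - σ t :=
    (continuous_const.mul continuous_subtype_val).sub h1
  exact ((extend_continuous hP).comp h1).dist ((extend_continuous hQ).comp h2)

lemma K.term_bdd {d : ℕ} {P Q : ℝ → Euc d} (hP : ContinuousOn P I01)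
    (hQ : ContinuousOn Q I01) {σ : I01 → ℝ} (hσ : σ ∈ K) :
    BddAbove (range fun t : I01 => dist (extend P (σ t)) (extend Q (2 * (t : ℝ) - σ t))) :=
  (isCompact_range (K.term_cont hP hQ hσ)).bddAbove

/-- The set in the definition of the Fréchet distance. -/
def S {d : ℕ} (P Q : ℝ → Euc d) : Set ℝ :=
  {r : ℝ | ∃ σ τ : ℝ → ℝ, IsReparamPair σ τ ∧
    r = ⨆ t : Set.Icc (0 : ℝ) 1, dist (P (σ t)) (Q (τ t))}

lemma S_bddBelow {d : ℕ} (P Q : ℝ → Euc d) : BddBelow (S P Q) := by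
  refine ⟨0, ?_⟩
  rintro r ⟨σ, τ, _, rfl⟩
  exact Real.iSup_nonneg fun t => dist_nonneg

/-- Every value of the functional on `K` is achieved by a genuine reparametrization pair. -/
lemma K.Fv_mem {d : ℕ} (P Q : ℝ → Euc d) {σ : I01 → ℝ} (hσ : σ ∈ K) :
    Fv P Q σ ∈ S P Q :=
  ⟨Sig σ, Tau σ, K.reparam hσ, (K.sup_eq P Q hσ).symm⟩

/-- Normalization: every reparametrization pair is dominated by an element of `K`. -/
lemma exists_K_le {d : ℕ} (P Q : ℝ → Euc d) (hP : ContinuousOn P I01)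
    (hQ : ContinuousOn Q I01) {σ τ : ℝ → ℝ} (hp : IsReparamPair σ τ) :
    ∃ g ∈ K, Fv P Q g ≤ ⨆ t : I01, dist (P (σ (t : ℝ))) (Q (τ (t : ℝ))) := by
  obtain ⟨hσc, hσm, hσi, hτc, hτm, hτi⟩ := hp
  have hσmem : ∀ t ∈ I01, σ t ∈ I01 := fun t ht => by
    have h := mem_image_of_mem σ ht
    rw [hσi] at h; exact h
  have hτmem : ∀ t ∈ I01, τ t ∈ I01 := fun t ht => by
    have h := mem_image_of_mem τ ht
    rw [hτi] at h; exact h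
  have hσ0 : σ 0 = 0 := by
    obtain ⟨x, hx, hσx⟩ : (0:ℝ) ∈ σ '' I01 := hσi.symm ▸ zmem
    have := hσm zmem hx hx.1
    have h0 := (hσmem 0 zmem).1
    linarith [hσx ▸ this]
  have hτ0 : τ 0 = 0 := by
    obtain ⟨x, hx, hτx⟩ : (0:ℝ) ∈ τ '' I01 := hτi.symm ▸ zmem
    have := hτm zmem hx hx.1
    have h0 := (hτmem 0 zmem).1
    linarith [hτx ▸ this]
  have hσ1 : σ 1 = 1 := by
    obtain ⟨x, hx, hσx⟩ : (1:ℝ) ∈ σ '' I01 := hσi.symm ▸ omem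
    have := hσm hx omem hx.2
    have h1 := (hσmem 1 omem).2
    linarith [hσx ▸ this]
  have hτ1 : τ 1 = 1 := by
    obtain ⟨x, hx, hτx⟩ : (1:ℝ) ∈ τ '' I01 := hτi.symm ▸ omem
    have := hτm hx omem hx.2
    have h1 := (hτmem 1 omem).2
    linarith [hτx ▸ this]
  -- the averaged time
  set s : ℝ → ℝ := fun t => (σ t + τ t) / 2 with hs_def
  have hsc : ContinuousOn s I01 := (hσc.add hτc).div_const 2
  have hsm : MonotoneOn s I01 := by
    intro x hx y hy hxy
    have h1 := hσm hx hy hxy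
    have h2 := hτm hx hy hxy
    simp only [hs_def]
    linarith
  have hs0 : s 0 = 0 := by simp [hs_def, hσ0, hτ0]
  have hs1 : s 1 = 1 := by simp [hs_def, hσ1, hτ1]
  -- level sets and their infima
  set L : I01 → Set ℝ := fun u => I01 ∩ s ⁻¹' {(u : ℝ)} with hL_def
  have hLne : ∀ u : I01, (L u).Nonempty := by
    intro u
    have h := intermediate_value_Icc zero_le_one hsc
    rw [hs0, hs1] at h
    obtain ⟨t, ht, hst⟩ := h u.2
    exact ⟨t, ht, hst⟩
  have hLclosed : ∀ u : I01, IsClosed (L u) :=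
    fun u => hsc.preimage_isClosed_of_isClosed isClosed_Icc isClosed_singleton
  have hLbdd : ∀ u : I01, BddBelow (L u) := fun u => ⟨0, fun t ht => ht.1.1⟩
  set h : I01 → ℝ := fun u => sInf (L u) with hh_def
  have hhmem : ∀ u : I01, h u ∈ L u := fun u => (hLclosed u).csInf_mem (hLne u) (hLbdd u)
  have hhI : ∀ u : I01, h u ∈ I01 := fun u => (hhmem u).1
  have hsh : ∀ u : I01, s (h u) = (u : ℝ) := fun u => (hhmem u).2
  have hhmono : ∀ u v : I01, u ≤ v → h u ≤ h v := by
    intro u v huv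
    apply le_csInf (hLne v)
    intro t ht
    by_contra hlt
    push_neg at hlt
    have h1 : s t ≤ s (h u) := hsm ht.1 (hhI u) hlt.le
    have h2 : s t = (v : ℝ) := ht.2
    have h3 : (u : ℝ) ≤ (v : ℝ) := huv
    have h4 : s t = (u : ℝ) := by rw [h2]; rw [hsh u] at h1; linarith [h2 ▸ h1]
    have : h u ≤ t := csInf_le (hLbdd u) ⟨ht.1, h4⟩
    linarith
  have hsum : ∀ u : I01, σ (h u) + τ (h u) = 2 * (u : ℝ) := by
    intro u
    have := hsh u
    simp only [hs_def] at this
    linarith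
  -- the normalized reparametrization
  set g : I01 → ℝ := fun u => σ (h u) with hg_def
  have hg0 : h (⟨0, zmem⟩ : I01) ∈ I01 := hhI _
  have hgK : g ∈ K := by
    refine ⟨?_, ?_, ?_⟩
    · have hsum0 := hsum ⟨0, zmem⟩
      have h1 := (hσmem _ (hhI ⟨0, zmem⟩)).1
      have h2 := (hτmem _ (hhI ⟨0, zmem⟩)).1
      have hc : ((⟨0, zmem⟩ : I01) : ℝ) = 0 := rfl
      rw [hc] at hsum0
      show σ (h ⟨0, zmem⟩) = 0
      linarith
    · have hsum1 := hsum ⟨1, omem⟩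
      have h1 := (hσmem _ (hhI ⟨1, omem⟩)).2
      have h2 := (hτmem _ (hhI ⟨1, omem⟩)).2
      have hc : ((⟨1, omem⟩ : I01) : ℝ) = 1 := rfl
      rw [hc] at hsum1
      show σ (h ⟨1, omem⟩) = 1
      linarith
    · intro u v huv
      have hm := hhmono u v huv
      have h1 := hσm (hhI u) (hhI v) hm
      have h2 := hτm (hhI u) (hhI v) hm
      have h3 := hsum u
      have h4 := hsum v
      show σ (h v) - σ (h u) ∈ Set.Icc 0 (2 * ((v : ℝ) - (u : ℝ)))
      rw [Set.mem_Icc]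
      constructor
      · linarith
      · linarith
  refine ⟨g, hgK, ?_⟩
  -- boundedness of the target family
  have hfc : ContinuousOn (fun t => dist (P (σ t)) (Q (τ t))) I01 :=
    continuous_dist.comp_continuousOn ((hP.comp hσc hσmem).prodMk (hQ.comp hτc hτmem))
  have hbdd : BddAbove (range fun t : I01 => dist (P (σ (t : ℝ))) (Q (τ (t : ℝ)))) := by
    have h := isCompact_Icc.bddAbove_image hfc
    rwa [← range_restrict] at h
  apply ciSup_le
  intro u
  have hgu : g u ∈ I01 := hσmem _ (hhI u)
  have htu : 2 * (u : ℝ) - g u = τ (h u) := by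
    have := hsum u
    simp only [hg_def]
    linarith
  rw [extend_eq hgu, htu, extend_eq (hτmem _ (hhI u))]
  exact le_ciSup hbdd (⟨h u, hhI u⟩ : I01)

/-- `K` is closed in the product topology. -/
lemma K_isClosed : IsClosed K := by
  have h1 : IsClosed {σ : I01 → ℝ | σ ⟨0, zmem⟩ = 0} :=
    isClosed_eq (continuous_apply _) continuous_const
  have h2 : IsClosed {σ : I01 → ℝ | σ ⟨1, omem⟩ = 1} :=
    isClosed_eq (continuous_apply _) continuous_const
  have h3 : IsClosed {σ : I01 → ℝ |
      ∀ u v : I01, u ≤ v → σ v - σ u ∈ Set.Icc 0 (2 * ((v : ℝ) - (u : ℝ)))} := by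
    have : {σ : I01 → ℝ |
        ∀ u v : I01, u ≤ v → σ v - σ u ∈ Set.Icc 0 (2 * ((v : ℝ) - (u : ℝ)))} =
        ⋂ (u : I01) (v : I01),
          {σ : I01 → ℝ | u ≤ v → σ v - σ u ∈ Set.Icc 0 (2 * ((v : ℝ) - (u : ℝ)))} := by
      ext σ; simp only [mem_setOf_eq, mem_iInter]
    rw [this]
    refine isClosed_iInter fun u => isClosed_iInter fun v => ?_
    by_cases huv : u ≤ v
    · have : {σ : I01 → ℝ | u ≤ v → σ v - σ u ∈ Set.Icc 0 (2 * ((v : ℝ) - (u : ℝ)))} =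
          (fun σ : I01 → ℝ => σ v - σ u) ⁻¹' Set.Icc 0 (2 * ((v : ℝ) - (u : ℝ))) := by
        ext σ; simp [huv]
      rw [this]
      exact IsClosed.preimage ((continuous_apply v).sub (continuous_apply u)) isClosed_Icc
    · have : {σ : I01 → ℝ | u ≤ v → σ v - σ u ∈ Set.Icc 0 (2 * ((v : ℝ) - (u : ℝ)))} =
          univ := by
        ext σ; simp [huv]
      rw [this]
      exact isClosed_univ
  have hK : K = {σ : I01 → ℝ | σ ⟨0, zmem⟩ = 0} ∩
      ({σ : I01 → ℝ | σ ⟨1, omem⟩ = 1} ∩ {σ : I01 → ℝ |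
        ∀ u v : I01, u ≤ v → σ v - σ u ∈ Set.Icc 0 (2 * ((v : ℝ) - (u : ℝ)))}) := by
    ext σ
    simp only [K, mem_setOf_eq, mem_inter_iff]
  rw [hK]
  exact h1.inter (h2.inter h3)

lemma K_nonempty : (K : Set (I01 → ℝ)).Nonempty := by
  refine ⟨fun t => (t : ℝ), ?_, ?_, ?_⟩
  · rfl
  · rfl
  · intro u v huv
    have : (u : ℝ) ≤ (v : ℝ) := huv
    constructor
    · simp only [mem_setOf_eq]; linarith
    · simp only [mem_setOf_eq]; linarith

lemma K_isCompact : IsCompact (K : Set (I01 → ℝ)) := by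
  have hsub : K ⊆ univ.pi fun _ : I01 => I01 := fun σ hσ t _ => K.mem_Icc hσ t
  exact (isCompact_univ_pi fun _ => isCompact_Icc).of_isClosed_subset K_isClosed hsub

/-- The functional `Fv` attains its minimum on `K`. -/
lemma exists_min {d : ℕ} (P Q : ℝ → Euc d) (hP : ContinuousOn P I01)
    (hQ : ContinuousOn Q I01) :
    ∃ g ∈ K, ∀ σ ∈ K, Fv P Q g ≤ Fv P Q σ := by
  set m : ℝ := sInf (Fv P Q '' K) with hm_def
  have hbddbelow : BddBelow (Fv P Q '' K) := by
    refine ⟨0, ?_⟩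
    rintro r ⟨σ, hσ, rfl⟩
    exact Real.iSup_nonneg fun t => dist_nonneg
  set A : ℕ → Set (I01 → ℝ) := fun n => K ∩ {σ | ∀ t : I01,
      dist (extend P (σ t)) (extend Q (2 * (t : ℝ) - σ t)) ≤ m + 1 / (n + 1)} with hA_def
  have hAmono : ∀ {a b : ℕ}, a ≤ b → A b ⊆ A a := by
    intro a b hab
    apply inter_subset_inter_right
    intro σ hσ t
    refine le_trans (hσ t) ?_
    have : (1:ℝ) / (b + 1) ≤ 1 / (a + 1) := by
      apply one_div_le_one_div_of_le
      · positivity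
      · have := (Nat.cast_le (α := ℝ)).mpr hab; linarith
    linarith
  have hAne : ∀ n : ℕ, (A n).Nonempty := by
    intro n
    have hpos : (0:ℝ) < 1 / (n + 1) := by positivity
    have hlt : m < m + 1 / (n + 1) := lt_add_of_pos_right _ hpos
    obtain ⟨r, hrmem, hr⟩ := exists_lt_of_csInf_lt (K_nonempty.image _) hlt
    obtain ⟨σ, hσ, rfl⟩ := hrmem
    refine ⟨σ, hσ, fun t => ?_⟩
    exact le_trans (le_ciSup (K.term_bdd hP hQ hσ) t) hr.le
  have hAclosed : ∀ n : ℕ, IsClosed (A n) := by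
    intro n
    apply K_isClosed.inter
    have : {σ : I01 → ℝ | ∀ t : I01,
        dist (extend P (σ t)) (extend Q (2 * (t : ℝ) - σ t)) ≤ m + 1 / (n + 1)} =
        ⋂ t : I01, {σ : I01 → ℝ |
          dist (extend P (σ t)) (extend Q (2 * (t : ℝ) - σ t)) ≤ m + 1 / (n + 1)} := by
      ext σ; simp only [mem_setOf_eq, mem_iInter]
    rw [this]
    refine isClosed_iInter fun t => ?_
    refine isClosed_le ?_ continuous_const
    have h1 : Continuous fun σ : I01 → ℝ => σ t := continuous_apply t
    have h2 : Continuous fun σ : I01 → ℝ => 2 * (t : ℝ) - σ t := continuous_const.sub h1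
    exact ((extend_continuous hP).comp h1).dist ((extend_continuous hQ).comp h2)
  have hAcompact : ∀ n : ℕ, IsCompact (A n) :=
    fun n => K_isCompact.of_isClosed_subset (hAclosed n) inter_subset_left
  have hAdir : Directed (fun x1 x2 : Set (I01 → ℝ) => x1 ⊇ x2) A := by
    intro a b
    exact ⟨max a b, hAmono (le_max_left a b), hAmono (le_max_right a b)⟩
  obtain ⟨g, hg⟩ := IsCompact.nonempty_iInter_of_directed_nonempty_isCompact_isClosed
    A hAdir hAne hAcompact hAclosed
  have hgA : ∀ n : ℕ, g ∈ A n := fun n => mem_iInter.mp hg n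
  have hgK : g ∈ K := (hgA 0).1
  refine ⟨g, hgK, fun σ hσ => ?_⟩
  have h1 : Fv P Q g ≤ m := by
    apply le_of_forall_pos_le_add
    intro ε hε
    obtain ⟨n, hn⟩ := exists_nat_one_div_lt hε
    have h2 : Fv P Q g ≤ m + 1 / (n + 1) := ciSup_le fun t => (hgA n).2 t
    refine h2.trans ?_
    have : (1:ℝ) / (n + 1) ≤ ε := hn.le
    linarith
  exact h1.trans (csInf_le hbddbelow (mem_image_of_mem _ hσ))

end FrechetAttained

open FrechetAttained in
/-- The infimum defining the Fréchet distance of two continuous curves is attained. -/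
theorem frechetDist_attained {d : ℕ} (P Q : ℝ → Euc d)
    (hP : ContinuousOn P (Set.Icc 0 1)) (hQ : ContinuousOn Q (Set.Icc 0 1)) :
    (∃ σ τ : ℝ → ℝ, IsReparamPair σ τ ∧
      (⨆ t : Set.Icc (0 : ℝ) 1, dist (P (σ t)) (Q (τ t))) = frechetDist P Q) ∧
    ∀ ε : ℝ, frechetDist P Q ≤ ε → ∃ σ τ : ℝ → ℝ, IsReparamPair σ τ ∧
      (⨆ t : Set.Icc (0 : ℝ) 1, dist (P (σ t)) (Q (τ t))) ≤ ε := by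
  obtain ⟨g, hgK, hgmin⟩ := exists_min P Q hP hQ
  have hpair : IsReparamPair (Sig g) (Tau g) := K.reparam hgK
  have hsup : (⨆ t : Set.Icc (0 : ℝ) 1, dist (P (Sig g t)) (Q (Tau g t))) = Fv P Q g :=
    K.sup_eq P Q hgK
  have hmem : Fv P Q g ∈ S P Q := K.Fv_mem P Q hgK
  have hfd : frechetDist P Q = sInf (S P Q) := rfl
  have h1 : frechetDist P Q ≤ Fv P Q g := by
    rw [hfd]; exact csInf_le (S_bddBelow P Q) hmem
  have h2 : Fv P Q g ≤ frechetDist P Q := by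
    rw [hfd]
    apply le_csInf ⟨_, hmem⟩
    rintro r ⟨σ, τ, hp, rfl⟩
    obtain ⟨g', hg'K, hg'⟩ := exists_K_le P Q hP hQ hp
    exact (hgmin g' hg'K).trans hg'
  have heq : (⨆ t : Set.Icc (0 : ℝ) 1, dist (P (Sig g t)) (Q (Tau g t))) = frechetDist P Q :=
    hsup.trans (le_antisymm h2 h1)
  exact ⟨⟨Sig g, Tau g, hpair, heq⟩,
    fun ε hε => ⟨Sig g, Tau g, hpair, heq.le.trans hε⟩⟩

end
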